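/- arXiv:2102.11325 — 3 statements merged into one kernel-verified Lean document; each statement's English description precedes it below -/
import Mathlib

section
/- Let d > 1, p ∈ (1,∞), s ∈ (0,1), let D ⊆ ℝ^d be a bounded open set, and let ψ: D → ℝ be a bounded Lipschitz (in particular, smooth with all derivatives bounded) function. Then there is a constant c, depending only on d, p, s, D, ‖ψ‖_∞ and the Lipschitz constant of ψ, such that for every vector field u on D, |uψ|_{X^{s,p}(D)} ≤ c ‖u‖_{X^{s,p}(D)}, where uψ denotes the pointwise product x ↦ ψ(x) u(x). -/
open MeasureTheory ENNReal NNReal RealInnerProductSpace Filter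

noncomputable section

abbrev Euc (d : ℕ) : Type := EuclideanSpace ℝ (Fin d)

/-- `∫_D ‖u‖^p` as an extended nonnegative real. -/
def lpIntP (d : ℕ) (p : ℝ) (D : Set (Euc d)) (u : Euc d → Euc d) : ℝ≥0∞ :=
  ∫⁻ x in D, (‖u x‖₊ : ℝ≥0∞) ^ p

/-- The `p`-th power of the fractional Sobolev (Gagliardo) seminorm `|u|_{W^{s,p}(D)}`. -/
def wSemiP (d : ℕ) (s p : ℝ) (D : Set (Euc d)) (u : Euc d → Euc d) : ℝ≥0∞ :=
  ∫⁻ x in D, ∫⁻ y in D,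
    (‖u x - u y‖₊ : ℝ≥0∞) ^ p / (‖x - y‖₊ : ℝ≥0∞) ^ ((d : ℝ) + s * p)

/-- The `p`-th power of the projected seminorm `|u|_{X^{s,p}(D)}`. -/
def xSemiP (d : ℕ) (s p : ℝ) (D : Set (Euc d)) (u : Euc d → Euc d) : ℝ≥0∞ :=
  ∫⁻ x in D, ∫⁻ y in D,
    ENNReal.ofReal (|(inner ℝ (u x - u y) (x - y) : ℝ)| / ‖x - y‖) ^ p
      / (‖x - y‖₊ : ℝ≥0∞) ^ ((d : ℝ) + s * p)

/-- The norm `‖u‖_{W^{s,p}(D)}`. -/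
def wNorm (d : ℕ) (s p : ℝ) (D : Set (Euc d)) (u : Euc d → Euc d) : ℝ≥0∞ :=
  (lpIntP d p D u + wSemiP d s p D u) ^ (1 / p)

/-- The norm `‖u‖_{X^{s,p}(D)}`. -/
def xNorm (d : ℕ) (s p : ℝ) (D : Set (Euc d)) (u : Euc d → Euc d) : ℝ≥0∞ :=
  (lpIntP d p D u + xSemiP d s p D u) ^ (1 / p)

/-- The class `(C^1_c(D))^d` of continuously differentiable vector fields compactly
supported in `D` (viewed as functions on all of `ℝ^d`, extended by zero). -/
def C1c (d : ℕ) (D : Set (Euc d)) : Set (Euc d → Euc d) :=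
  {u | ContDiff ℝ 1 u ∧ HasCompactSupport u ∧ tsupport u ⊆ D}

/-- `W_0^{s,p}(D)`: the closure of `(C^1_c(D))^d` in the norm `‖·‖_{W^{s,p}(D)}`. -/
def W0 (d : ℕ) (s p : ℝ) (D : Set (Euc d)) : Set (Euc d → Euc d) :=
  {u | Measurable u ∧ wNorm d s p D u ≠ ⊤ ∧
    ∃ v : ℕ → Euc d → Euc d, (∀ n, v n ∈ C1c d D) ∧
      Tendsto (fun n => wNorm d s p D (v n - u)) atTop (nhds 0)}

/-- `X_0^{s,p}(D)`: the closure of `(C^1_c(D))^d` in the norm `‖·‖_{X^{s,p}(D)}`. -/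
def X0 (d : ℕ) (s p : ℝ) (D : Set (Euc d)) : Set (Euc d → Euc d) :=
  {u | Measurable u ∧ xNorm d s p D u ≠ ⊤ ∧
    ∃ v : ℕ → Euc d → Euc d, (∀ n, v n ∈ C1c d D) ∧
      Tendsto (fun n => xNorm d s p D (v n - u)) atTop (nhds 0)}

/-- The first `d-1` coordinates `x'` of a point `x ∈ ℝ^d`. -/
def proj' (d : ℕ) (x : Euc d) : Euc (d - 1) :=
  WithLp.toLp 2 (fun i => x (Fin.castLE (Nat.sub_le d 1) i))

/-- The epigraph `{(x', x_d) : x_d > f(x')}` of `f : ℝ^{d-1} → ℝ`. -/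
def epigraph (d : ℕ) (hd : 0 < d) (f : Euc (d - 1) → ℝ) : Set (Euc d) :=
  {x | f (proj' d x) < x ⟨d - 1, Nat.sub_lt hd Nat.one_pos⟩}

/-- The upper half-space `ℝ^d_+`. -/
def halfSpace (d : ℕ) (hd : 0 < d) : Set (Euc d) :=
  {x | 0 < x ⟨d - 1, Nat.sub_lt hd Nat.one_pos⟩}

/-- `D` is a Lipschitz open set with constant `L`. -/
def IsLipschitzSet (d : ℕ) (hd : 0 < d) (L : ℝ) (D : Set (Euc d)) : Prop :=
  ∃ (n : ℕ) (z : Fin n → Euc d) (r : Fin n → ℝ)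
    (f : Fin n → Euc (d - 1) → ℝ) (R : Fin n → (Euc d ≃ᵢ Euc d)),
    (∀ i, z i ∈ frontier D) ∧ (∀ i, 0 < r i) ∧
    (∀ i, LipschitzWith (Real.toNNReal L) (f i)) ∧
    frontier D ⊆ ⋃ i, Metric.ball (z i) (r i) ∧
    (∀ i, R i '' (Metric.ball (z i) (r i) ∩ D) ⊆ epigraph d hd (f i)) ∧
    (∀ i, R i '' (Metric.ball (z i) (r i) ∩ frontier D)
        = R i '' Metric.ball (z i) (r i) ∩ frontier (epigraph d hd (f i)))

/-- `D` is a `C^1` open set. -/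
def IsC1Set (d : ℕ) (hd : 0 < d) (D : Set (Euc d)) : Prop :=
  ∃ (n : ℕ) (z : Fin n → Euc d) (r : Fin n → ℝ)
    (f : Fin n → Euc (d - 1) → ℝ) (R : Fin n → (Euc d ≃ᵢ Euc d)),
    (∀ i, z i ∈ frontier D) ∧ (∀ i, 0 < r i) ∧
    (∀ i, ContDiff ℝ 1 (f i)) ∧
    frontier D ⊆ ⋃ i, Metric.ball (z i) (r i) ∧
    (∀ i, R i '' (Metric.ball (z i) (r i) ∩ D) ⊆ epigraph d hd (f i)) ∧
    (∀ i, R i '' (Metric.ball (z i) (r i) ∩ frontier D)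
        = R i '' Metric.ball (z i) (r i) ∩ frontier (epigraph d hd (f i)))

/-- The constant `C(L) = √(1 + L(L+1))`. -/
def CL (L : ℝ) : ℝ := Real.sqrt (1 + L * (L + 1))

/-- The graph-flattening map `T(x', x_d) = (x', x_d - f(x'))`. -/
def flatten (d : ℕ) (f : Euc (d - 1) → ℝ) (x : Euc d) : Euc d :=
  WithLp.toLp 2 (fun i => if (i : ℕ) = d - 1 then x i - f (proj' d x) else x i)

/-- The inverse map `T⁻¹(w', w_d) = (w', w_d + f(w'))`. -/
def shiftGraph (d : ℕ) (f : Euc (d - 1) → ℝ) (w : Euc d) : Euc d :=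
  WithLp.toLp 2 (fun i => if (i : ℕ) = d - 1 then w i + f (proj' d w) else w i)

/-- The `p`-th power of the fractional Sobolev seminorm of a scalar function. -/
def wSemiPScalar (d : ℕ) (s p : ℝ) (D : Set (Euc d)) (g : Euc d → ℝ) : ℝ≥0∞ :=
  ∫⁻ x in D, ∫⁻ y in D,
    (‖g x - g y‖₊ : ℝ≥0∞) ^ p / (‖x - y‖₊ : ℝ≥0∞) ^ ((d : ℝ) + s * p)

/-- `B_δ = {x ∈ B : dist(x, ∂B) > δ}`. -/
def innerSet (d : ℕ) (δ : ℝ) (B : Set (Euc d)) : Set (Euc d) :=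
  {x ∈ B | δ < Metric.infDist x (frontier B)}

/-- finiteness of the singular integral `∫_{B(0,T)} ‖z‖^β` for `β > -d`. -/
lemma aux_ball_rpow_lt_top (d : ℕ) (hd : 0 < d) {β : ℝ} (hβ : -(d : ℝ) < β)
    {T : ℝ} (hT : 0 < T) :
    ∫⁻ z in Metric.ball (0 : Euc d) T, (‖z‖₊ : ℝ≥0∞) ^ β < ⊤ := by
  haveI : Nonempty (Fin d) := ⟨⟨0, hd⟩⟩
  haveI : Nontrivial (Euc d) := ⟨0, EuclideanSpace.single ⟨0, hd⟩ 1, by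
    intro h
    have := congrArg (fun v : Euc d => v ⟨0, hd⟩) h
    simp at this⟩
  rcases le_or_gt 0 β with hβ0 | hβ0
  · -- bounded integrand
    have hb : ∀ z ∈ Metric.ball (0 : Euc d) T, (‖z‖₊ : ℝ≥0∞) ^ β ≤ ENNReal.ofReal (T ^ β) := by
      intro z hz
      rw [Metric.mem_ball, dist_zero_right] at hz
      calc (‖z‖₊ : ℝ≥0∞) ^ β ≤ (ENNReal.ofReal T) ^ β := by
            apply ENNReal.rpow_le_rpow _ hβ0
            rw [← enorm_eq_nnnorm, ← ofReal_norm]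
            exact ENNReal.ofReal_le_ofReal hz.le
        _ = ENNReal.ofReal (T ^ β) := ENNReal.ofReal_rpow_of_pos hT
    calc ∫⁻ z in Metric.ball (0 : Euc d) T, (‖z‖₊ : ℝ≥0∞) ^ β
        ≤ ∫⁻ _ in Metric.ball (0 : Euc d) T, ENNReal.ofReal (T ^ β) :=
          setLIntegral_mono' measurableSet_ball hb
      _ = ENNReal.ofReal (T ^ β) * volume (Metric.ball (0 : Euc d) T) := setLIntegral_const _ _
      _ < ⊤ := ENNReal.mul_lt_top ENNReal.ofReal_lt_top measure_ball_lt_top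
  · -- annuli
    set r : ℕ → ℝ := fun n => T / 2 ^ n with hr
    have hrpos : ∀ n, 0 < r n := fun n => by rw [hr]; positivity
    set A : ℕ → Set (Euc d) := fun n => Metric.ball 0 (r n) \ Metric.ball 0 (r (n + 1)) with hA
    have hcov : Metric.ball (0 : Euc d) T \ {0} ⊆ ⋃ n, A n := by
      intro z hz
      obtain ⟨hzT, hz0⟩ := hz
      rw [Metric.mem_ball, dist_zero_right] at hzT
      have hz0' : 0 < ‖z‖ := by simpa [norm_pos_iff] using hz0
      have hex : ∃ n, r n ≤ ‖z‖ := by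
        obtain ⟨n, hn⟩ := pow_unbounded_of_one_lt (T / ‖z‖) (one_lt_two (α := ℝ))
        refine ⟨n, ?_⟩
        rw [div_lt_iff₀ hz0'] at hn
        rw [hr]
        rw [div_le_iff₀ (by positivity)]
        nlinarith [hn]
      classical
      set n₀ := Nat.find hex with hn₀
      have hn₀pos : 0 < n₀ := by
        rcases Nat.eq_zero_or_pos n₀ with h | h
        · exfalso
          have h2 := Nat.find_spec hex
          rw [← hn₀, h] at h2
          simp [hr] at h2
          linarith
        · exact h
      refine Set.mem_iUnion.2 ⟨n₀ - 1, ?_, ?_⟩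
      · have hlt : ¬ r (n₀ - 1) ≤ ‖z‖ := Nat.find_min hex (by omega)
        rw [Metric.mem_ball, dist_zero_right]
        linarith [not_le.1 hlt]
      · have h2 : r ((n₀ - 1) + 1) ≤ ‖z‖ := by
          rw [Nat.sub_add_cancel hn₀pos]
          exact Nat.find_spec hex
        rw [Metric.mem_ball, dist_zero_right]
        exact not_lt.2 h2
    have hae : (Metric.ball (0 : Euc d) T \ {0} : Set (Euc d)) =ᵐ[volume]
        Metric.ball (0 : Euc d) T :=
      diff_ae_eq_self.2 (measure_mono_null Set.inter_subset_right (measure_singleton 0))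
    set V := volume (Metric.ball (0 : Euc d) 1) with hV
    have hVne : V ≠ ⊤ := measure_ball_lt_top.ne
    have hstep : ∀ n, ∫⁻ z in A n, (‖z‖₊ : ℝ≥0∞) ^ β
        ≤ ENNReal.ofReal ((r (n + 1)) ^ β * (r n) ^ (d : ℕ)) * V := by
      intro n
      have hb : ∀ z ∈ A n, (‖z‖₊ : ℝ≥0∞) ^ β ≤ ENNReal.ofReal ((r (n + 1)) ^ β) := by
        intro z hz
        obtain ⟨hz1, hz2⟩ := hz
        rw [Metric.mem_ball, dist_zero_right, not_lt] at hz2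
        have hzpos : 0 < ‖z‖ := lt_of_lt_of_le (hrpos (n + 1)) hz2
        rw [← enorm_eq_nnnorm, ← ofReal_norm, ENNReal.ofReal_rpow_of_pos hzpos]
        exact ENNReal.ofReal_le_ofReal
          (Real.rpow_le_rpow_of_nonpos (hrpos (n + 1)) hz2 hβ0.le)
      have hAm : MeasurableSet (A n) :=
        measurableSet_ball.diff measurableSet_ball
      calc ∫⁻ z in A n, (‖z‖₊ : ℝ≥0∞) ^ β
          ≤ ∫⁻ _ in A n, ENNReal.ofReal ((r (n + 1)) ^ β) := setLIntegral_mono' hAm hb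
        _ = ENNReal.ofReal ((r (n + 1)) ^ β) * volume (A n) := setLIntegral_const _ _
        _ ≤ ENNReal.ofReal ((r (n + 1)) ^ β) * volume (Metric.ball (0 : Euc d) (r n)) := by
            exact mul_le_mul_right (measure_mono Set.diff_subset) _
        _ = ENNReal.ofReal ((r (n + 1)) ^ β * (r n) ^ (d : ℕ)) * V := by
            rw [Measure.addHaar_ball volume (0 : Euc d) (hrpos n).le,
              finrank_euclideanSpace_fin, ENNReal.ofReal_mul (by positivity), hV, mul_assoc]
    -- geometric computation
    have hpow : ∀ (γ : ℝ) (m : ℕ), (r m) ^ γ = T ^ γ * ((2 : ℝ) ^ (-γ)) ^ m := by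
      intro γ m
      rw [hr]
      rw [Real.div_rpow hT.le (by positivity), ← Real.rpow_natCast (2 : ℝ) m,
        ← Real.rpow_mul (by norm_num), ← Real.rpow_natCast ((2 : ℝ) ^ (-γ)) m,
        ← Real.rpow_mul (by norm_num), div_eq_mul_inv, ← Real.rpow_neg (by norm_num)]
      ring_nf
    set w : ℝ := (2 : ℝ) ^ (-(β + (d : ℝ))) with hw
    have hw0 : 0 ≤ w := by rw [hw]; positivity
    have hw1 : w < 1 := by
      rw [hw]
      exact Real.rpow_lt_one_of_one_lt_of_neg one_lt_two (by linarith)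
    set C : ℝ := T ^ β * T ^ ((d : ℕ) : ℝ) * (2 : ℝ) ^ (-β) with hC
    have hkey : ∀ n : ℕ, (r (n + 1)) ^ β * (r n) ^ (d : ℕ) = C * w ^ n := by
      intro n
      have h1 : (r n) ^ (d : ℕ) = (r n) ^ ((d : ℕ) : ℝ) := (Real.rpow_natCast _ d).symm
      rw [h1, hpow β (n + 1), hpow ((d : ℕ) : ℝ) n, hC, hw]
      rw [pow_succ]
      rw [show -(β + (d : ℝ)) = -β + -((d : ℕ) : ℝ) by ring]
      rw [Real.rpow_add two_pos, mul_pow]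
      ring
    calc ∫⁻ z in Metric.ball (0 : Euc d) T, (‖z‖₊ : ℝ≥0∞) ^ β
        = ∫⁻ z in Metric.ball (0 : Euc d) T \ {0}, (‖z‖₊ : ℝ≥0∞) ^ β :=
          (setLIntegral_congr hae).symm
      _ ≤ ∫⁻ z in ⋃ n, A n, (‖z‖₊ : ℝ≥0∞) ^ β := lintegral_mono_set hcov
      _ ≤ ∑' n, ∫⁻ z in A n, (‖z‖₊ : ℝ≥0∞) ^ β := lintegral_iUnion_le _ _
      _ ≤ ∑' n, ENNReal.ofReal ((r (n + 1)) ^ β * (r n) ^ (d : ℕ)) * V :=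
          ENNReal.tsum_le_tsum hstep
      _ = ∑' n, ENNReal.ofReal C * (ENNReal.ofReal w ^ n * V) := by
          refine tsum_congr fun n => ?_
          rw [hkey n, ENNReal.ofReal_mul (by rw [hC]; positivity), ENNReal.ofReal_pow hw0,
            mul_assoc]
      _ = ENNReal.ofReal C * ((∑' n, ENNReal.ofReal w ^ n) * V) := by
          rw [ENNReal.tsum_mul_left, ENNReal.tsum_mul_right]
      _ < ⊤ := by
          apply ENNReal.mul_lt_top ENNReal.ofReal_lt_top
          apply ENNReal.mul_lt_top _ hVne.lt_top
          rw [ENNReal.tsum_geometric]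
          exact ENNReal.inv_lt_top.2 (tsub_pos_of_lt (ENNReal.ofReal_lt_one.2 hw1))

/-- `(A + B)^p ≤ 2^p * (A^p + B^p)`. -/
lemma aux_add_rpow_le (A B : ℝ≥0∞) {p : ℝ} (hp : 0 ≤ p) :
    (A + B) ^ p ≤ (2 : ℝ≥0∞) ^ p * (A ^ p + B ^ p) := by
  calc (A + B) ^ p ≤ (2 * max A B) ^ p := by
        apply ENNReal.rpow_le_rpow _ hp
        rw [two_mul]
        exact add_le_add (le_max_left _ _) (le_max_right _ _)
    _ = (2 : ℝ≥0∞) ^ p * (max A B) ^ p := ENNReal.mul_rpow_of_nonneg _ _ hp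
    _ ≤ (2 : ℝ≥0∞) ^ p * (A ^ p + B ^ p) := by
        apply mul_le_mul_right
        rcases max_cases A B with ⟨h, _⟩ | ⟨h, _⟩ <;> rw [h]
        · exact le_self_add
        · exact le_add_self

theorem stmt8 (d : ℕ) (hd : 1 < d) (p s : ℝ) (hp : 1 < p) (hs0 : 0 < s) (hs1 : s < 1)
    (D : Set (Euc d)) (hD : IsOpen D) (hDb : Bornology.IsBounded D) (M : ℝ) (K : ℝ≥0) :
    ∃ c : ℝ, 0 < c ∧ ∀ (ψ : Euc d → ℝ) (u : Euc d → Euc d),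
      LipschitzOnWith K ψ D → (∀ x ∈ D, |ψ x| ≤ M) → Measurable u →
      xSemiP d s p D (fun x => ψ x • u x) ^ (1 / p) ≤ ENNReal.ofReal c * xNorm d s p D u := by
  have hd0 : 0 < d := by omega
  have hp0 : (0 : ℝ) < p := by linarith
  have hip : (0 : ℝ) ≤ 1 / p := by positivity
  obtain ⟨R₀, hR₀⟩ := hDb.subset_ball 0
  set R : ℝ := max R₀ 1 with hRdef
  have hR0 : (0 : ℝ) < R := lt_of_lt_of_le one_pos (le_max_right _ _)
  have hDR : D ⊆ Metric.ball 0 R := hR₀.trans (Metric.ball_subset_ball (le_max_left _ _))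
  set β : ℝ := p - ((d : ℝ) + s * p) with hβdef
  have hβ : -(d : ℝ) < β := by nlinarith
  set I : ℝ≥0∞ := ∫⁻ z in Metric.ball (0 : Euc d) (2 * R), (‖z‖₊ : ℝ≥0∞) ^ β with hIdef
  have hI : I ≠ ⊤ := (aux_ball_rpow_lt_top d hd0 hβ (by linarith)).ne
  have h2top : (2 : ℝ≥0∞) ^ p ≠ ⊤ := by
    exact ENNReal.rpow_ne_top_of_nonneg hp0.le (by norm_num)
  set C1 : ℝ≥0∞ := (2 : ℝ≥0∞) ^ p * ENNReal.ofReal |M| ^ p with hC1def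
  set C2 : ℝ≥0∞ := (2 : ℝ≥0∞) ^ p * (K : ℝ≥0∞) ^ p with hC2def
  have hC1top : C1 ≠ ⊤ :=
    ENNReal.mul_ne_top h2top (ENNReal.rpow_ne_top_of_nonneg hp0.le ENNReal.ofReal_ne_top)
  have hC2top : C2 ≠ ⊤ :=
    ENNReal.mul_ne_top h2top (ENNReal.rpow_ne_top_of_nonneg hp0.le ENNReal.coe_ne_top)
  set total : ℝ≥0∞ := C1 + C2 * I with htotaldef
  have htot : total ≠ ⊤ := by
    rw [htotaldef]
    exact ENNReal.add_ne_top.2 ⟨hC1top, ENNReal.mul_ne_top hC2top hI⟩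
  refine ⟨(total.toReal + 1) ^ (1 / p), by positivity, ?_⟩
  intro ψ u hLip hM hu
  set c : ℝ := (total.toReal + 1) ^ (1 / p) with hcdef
  have hc0 : 0 ≤ c := by positivity
  have hcp : total ≤ ENNReal.ofReal c ^ p := by
    rw [ENNReal.ofReal_rpow_of_nonneg hc0 hp0.le, hcdef,
      ← Real.rpow_mul (by positivity), one_div_mul_cancel hp0.ne', Real.rpow_one]
    calc total = ENNReal.ofReal total.toReal := (ENNReal.ofReal_toReal htot).symm
      _ ≤ ENNReal.ofReal (total.toReal + 1) := ENNReal.ofReal_le_ofReal (by linarith)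
  -- notation
  set nd : Euc d → Euc d → ℝ≥0∞ :=
    fun x y => (‖x - y‖₊ : ℝ≥0∞) ^ ((d : ℝ) + s * p) with hnddef
  set bb : Euc d × Euc d → ℝ≥0∞ := fun q =>
    ENNReal.ofReal (|(inner ℝ (u q.1 - u q.2) (q.1 - q.2) : ℝ)| / ‖q.1 - q.2‖) ^ p
      / (‖q.1 - q.2‖₊ : ℝ≥0∞) ^ ((d : ℝ) + s * p) with hbbdef
  set gg : Euc d → ℝ≥0∞ := fun z =>
    (‖z‖₊ : ℝ≥0∞) ^ p / (‖z‖₊ : ℝ≥0∞) ^ ((d : ℝ) + s * p) with hggdef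
  set qq : Euc d × Euc d → ℝ≥0∞ := fun q =>
    (‖u q.2‖₊ : ℝ≥0∞) ^ p * gg (q.1 - q.2) with hqqdef
  -- measurability
  have mgg : Measurable gg := by
    rw [hggdef]
    exact (ENNReal.continuous_rpow_const.measurable.comp
        measurable_nnnorm.coe_nnreal_ennreal).div
      (ENNReal.continuous_rpow_const.measurable.comp
        measurable_nnnorm.coe_nnreal_ennreal)
  have msub : Measurable fun q : Euc d × Euc d => q.1 - q.2 :=
    measurable_fst.sub measurable_snd
  have mbb : Measurable bb := by
    rw [hbbdef]
    apply Measurable.div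
    · apply ENNReal.continuous_rpow_const.measurable.comp
      apply ENNReal.measurable_ofReal.comp
      apply Measurable.div
      · exact (((hu.comp measurable_fst).sub (hu.comp measurable_snd)).inner msub).abs
      · exact msub.norm
    · exact ENNReal.continuous_rpow_const.measurable.comp
        (msub.nnnorm.coe_nnreal_ennreal)
  have mqq : Measurable qq := by
    rw [hqqdef]
    exact (ENNReal.continuous_rpow_const.measurable.comp
      ((hu.comp measurable_snd).nnnorm.coe_nnreal_ennreal)).mul (mgg.comp msub)
  -- pointwise estimate
  have step1 : ∀ x ∈ D, ∀ y ∈ D,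
      ENNReal.ofReal (|(inner ℝ (ψ x • u x - ψ y • u y) (x - y) : ℝ)| / ‖x - y‖) ^ p
        / (‖x - y‖₊ : ℝ≥0∞) ^ ((d : ℝ) + s * p)
      ≤ C1 * bb (x, y) + C2 * qq (x, y) := by
    intro x hx y hy
    have hre : |(inner ℝ (ψ x • u x - ψ y • u y) (x - y) : ℝ)| / ‖x - y‖
        ≤ |M| * (|(inner ℝ (u x - u y) (x - y) : ℝ)| / ‖x - y‖) + ((K : ℝ) * ‖u y‖) * ‖x - y‖ := by
      rcases eq_or_ne x y with rfl | hxy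
      · simp
      · have hn : 0 < ‖x - y‖ := by rwa [norm_pos_iff, sub_ne_zero]
        rw [div_le_iff₀ hn]
        have hdecomp : ψ x • u x - ψ y • u y = ψ x • (u x - u y) + (ψ x - ψ y) • u y := by
          module
        rw [hdecomp, inner_add_left, real_inner_smul_left, real_inner_smul_left]
        have hlip2 : |ψ x - ψ y| ≤ (K : ℝ) * ‖x - y‖ := by
          have := hLip.dist_le_mul x hx y hy
          rwa [Real.dist_eq, dist_eq_norm] at this
        calc |ψ x * (inner ℝ (u x - u y) (x - y) : ℝ) + (ψ x - ψ y) * (inner ℝ (u y) (x - y) : ℝ)|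
            ≤ |ψ x| * |(inner ℝ (u x - u y) (x - y) : ℝ)|
              + |ψ x - ψ y| * |(inner ℝ (u y) (x - y) : ℝ)| := by
              refine (abs_add_le _ _).trans ?_
              rw [abs_mul, abs_mul]
          _ ≤ |M| * |(inner ℝ (u x - u y) (x - y) : ℝ)|
              + ((K : ℝ) * ‖x - y‖) * (‖u y‖ * ‖x - y‖) := by
              refine add_le_add
                (mul_le_mul_of_nonneg_right ((hM x hx).trans (le_abs_self M)) (abs_nonneg _)) ?_
              exact mul_le_mul hlip2 (abs_real_inner_le_norm _ _) (abs_nonneg _) (by positivity)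
          _ = (|M| * (|(inner ℝ (u x - u y) (x - y) : ℝ)| / ‖x - y‖)
              + ((K : ℝ) * ‖u y‖) * ‖x - y‖) * ‖x - y‖ := by
              field_simp
    have h1 : ENNReal.ofReal (|(inner ℝ (ψ x • u x - ψ y • u y) (x - y) : ℝ)| / ‖x - y‖)
        ≤ ENNReal.ofReal (|M| * (|(inner ℝ (u x - u y) (x - y) : ℝ)| / ‖x - y‖))
          + ENNReal.ofReal (((K : ℝ) * ‖u y‖) * ‖x - y‖) :=
      le_trans (ENNReal.ofReal_le_ofReal hre) ENNReal.ofReal_add_le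
    have h2 : ENNReal.ofReal (|(inner ℝ (ψ x • u x - ψ y • u y) (x - y) : ℝ)| / ‖x - y‖) ^ p
        ≤ (2 : ℝ≥0∞) ^ p
          * (ENNReal.ofReal (|M| * (|(inner ℝ (u x - u y) (x - y) : ℝ)| / ‖x - y‖)) ^ p
            + ENNReal.ofReal (((K : ℝ) * ‖u y‖) * ‖x - y‖) ^ p) :=
      le_trans (ENNReal.rpow_le_rpow h1 hp0.le) (aux_add_rpow_le _ _ hp0.le)
    have hA : ENNReal.ofReal (|M| * (|(inner ℝ (u x - u y) (x - y) : ℝ)| / ‖x - y‖)) ^ p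
        = ENNReal.ofReal |M| ^ p
          * ENNReal.ofReal (|(inner ℝ (u x - u y) (x - y) : ℝ)| / ‖x - y‖) ^ p := by
      rw [ENNReal.ofReal_mul (abs_nonneg M), ENNReal.mul_rpow_of_nonneg _ _ hp0.le]
    have hB : ENNReal.ofReal (((K : ℝ) * ‖u y‖) * ‖x - y‖) ^ p
        = (K : ℝ≥0∞) ^ p * (‖u y‖₊ : ℝ≥0∞) ^ p * (‖x - y‖₊ : ℝ≥0∞) ^ p := by
      rw [ENNReal.ofReal_mul (by positivity), ENNReal.ofReal_mul (K.coe_nonneg),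
        ENNReal.ofReal_coe_nnreal, ofReal_norm, enorm_eq_nnnorm, ofReal_norm, enorm_eq_nnnorm,
        ENNReal.mul_rpow_of_nonneg _ _ hp0.le, ENNReal.mul_rpow_of_nonneg _ _ hp0.le]
    calc ENNReal.ofReal (|(inner ℝ (ψ x • u x - ψ y • u y) (x - y) : ℝ)| / ‖x - y‖) ^ p
          / (‖x - y‖₊ : ℝ≥0∞) ^ ((d : ℝ) + s * p)
        ≤ ((2 : ℝ≥0∞) ^ p
            * (ENNReal.ofReal (|M| * (|(inner ℝ (u x - u y) (x - y) : ℝ)| / ‖x - y‖)) ^ p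
              + ENNReal.ofReal (((K : ℝ) * ‖u y‖) * ‖x - y‖) ^ p))
          / (‖x - y‖₊ : ℝ≥0∞) ^ ((d : ℝ) + s * p) := ENNReal.div_le_div_right h2 _
      _ = C1 * bb (x, y) + C2 * qq (x, y) := by
          rw [hA, hB, hC1def, hC2def, hbbdef, hqqdef, hggdef]
          simp only [div_eq_mul_inv]
          ring
  -- integral comparison
  have key : xSemiP d s p D (fun x => ψ x • u x)
      ≤ C1 * xSemiP d s p D u + C2 * (I * lpIntP d p D u) := by
    have hDm : MeasurableSet D := hD.measurableSet
    calc xSemiP d s p D (fun x => ψ x • u x)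
        ≤ ∫⁻ x in D, ∫⁻ y in D, (C1 * bb (x, y) + C2 * qq (x, y)) := by
          rw [xSemiP]
          refine setLIntegral_mono' hDm fun x hx => ?_
          exact setLIntegral_mono' hDm fun y hy => step1 x hx y hy
      _ = (∫⁻ x in D, ∫⁻ y in D, C1 * bb (x, y))
          + ∫⁻ x in D, ∫⁻ y in D, C2 * qq (x, y) := by
          rw [← lintegral_add_left']
          · refine lintegral_congr fun x => ?_
            rw [lintegral_add_left']
            exact ((mbb.const_mul C1).comp measurable_prodMk_left).aemeasurable
          · exact (Measurable.lintegral_prod_right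
              (f := fun x y => C1 * bb (x, y)) (mbb.const_mul C1)).aemeasurable
      _ = C1 * xSemiP d s p D u + C2 * ∫⁻ x in D, ∫⁻ y in D, qq (x, y) := by
          congr 1
          · rw [xSemiP, ← lintegral_const_mul' C1 _ hC1top]
            refine lintegral_congr fun x => ?_
            rw [← lintegral_const_mul' C1 _ hC1top]
          · rw [← lintegral_const_mul' C2 _ hC2top]
            refine lintegral_congr fun x => ?_
            rw [← lintegral_const_mul' C2 _ hC2top]
      _ ≤ C1 * xSemiP d s p D u + C2 * (I * lpIntP d p D u) := by
          apply add_le_add_right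
          apply mul_le_mul_right
          -- swap and estimate
          have hswap : ∫⁻ x in D, ∫⁻ y in D, qq (x, y)
              = ∫⁻ y in D, ∫⁻ x in D, qq (x, y) :=
            lintegral_lintegral_swap (mqq.aemeasurable)
          rw [hswap]
          have hIy : ∀ y ∈ D, ∫⁻ x in D, gg (x - y) ≤ I := by
            intro y hy
            have hsub : D ⊆ Metric.ball y (2 * R) := by
              intro x hx
              have h1 : dist x (0 : Euc d) < R := hDR hx
              have h2 : dist y (0 : Euc d) < R := hDR hy
              rw [Metric.mem_ball]
              calc dist x y ≤ dist x 0 + dist y 0 := dist_triangle_right _ _ _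
                _ < 2 * R := by linarith
            have htr : ∫⁻ x in Metric.ball y (2 * R), gg (x - y)
                = ∫⁻ z in Metric.ball (0 : Euc d) (2 * R), gg z := by
              have h := (measurePreserving_add_right volume y).setLIntegral_comp_preimage_emb
                (MeasurableEquiv.addRight y).measurableEmbedding
                (fun x => gg (x - y)) (Metric.ball y (2 * R))
              simp only [add_sub_cancel_right] at h
              rw [← h]
              congr 1
              ext z
              simp [Metric.mem_ball, dist_eq_norm]
            have hgle : ∀ z : Euc d, gg z ≤ (‖z‖₊ : ℝ≥0∞) ^ β := by
              intro z
              rcases eq_or_ne z 0 with rfl | hz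
              · simp [hggdef, ENNReal.zero_rpow_of_pos hp0]
              · have hz0 : (‖z‖₊ : ℝ≥0∞) ≠ 0 := by
                  simpa [norm_eq_zero] using hz
                rw [hggdef, hβdef]
                exact le_of_eq (ENNReal.rpow_sub _ _ hz0 ENNReal.coe_ne_top).symm
            calc ∫⁻ x in D, gg (x - y)
                ≤ ∫⁻ x in Metric.ball y (2 * R), gg (x - y) := lintegral_mono_set hsub
              _ = ∫⁻ z in Metric.ball (0 : Euc d) (2 * R), gg z := htr
              _ ≤ I := by rw [hIdef]; exact lintegral_mono fun z => hgle z
          calc ∫⁻ y in D, ∫⁻ x in D, qq (x, y)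
              = ∫⁻ y in D, (‖u y‖₊ : ℝ≥0∞) ^ p * ∫⁻ x in D, gg (x - y) := by
                refine lintegral_congr fun y => ?_
                rw [hqqdef]
                exact lintegral_const_mul' ((‖u y‖₊ : ℝ≥0∞) ^ p) (fun x => gg (x - y))
                  (ENNReal.rpow_ne_top_of_nonneg hp0.le ENNReal.coe_ne_top)
            _ ≤ ∫⁻ y in D, (‖u y‖₊ : ℝ≥0∞) ^ p * I :=
                setLIntegral_mono' hDm fun y hy => mul_le_mul_right (hIy y hy) _
            _ = I * lpIntP d p D u := by
                rw [lpIntP, lintegral_mul_const' I _ hI, mul_comm]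
  -- conclusion
  calc xSemiP d s p D (fun x => ψ x • u x) ^ (1 / p)
      ≤ (total * (lpIntP d p D u + xSemiP d s p D u)) ^ (1 / p) := by
        apply ENNReal.rpow_le_rpow _ hip
        refine key.trans ?_
        rw [htotaldef, add_mul]
        refine add_le_add (mul_le_mul_right le_add_self _) ?_
        rw [← mul_assoc]
        exact mul_le_mul_right le_self_add _
    _ ≤ (ENNReal.ofReal c ^ p * (lpIntP d p D u + xSemiP d s p D u)) ^ (1 / p) :=
        ENNReal.rpow_le_rpow (mul_le_mul_left hcp _) hip
    _ = ENNReal.ofReal c * xNorm d s p D u := by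
        rw [ENNReal.mul_rpow_of_nonneg _ _ hip, ← ENNReal.rpow_mul,
          mul_one_div_cancel hp0.ne', ENNReal.rpow_one, xNorm]
end
end

section
/- Let d > 1, p ∈ (1,∞), s ∈ (0,1), δ > 0. Let B, U ⊆ ℝ^d be open sets with U ∩ B_δ ≠ ∅ and U \ B ≠ ∅, where B_δ = {x ∈ B : dist(x, ∂B) > δ}. Let u be a vector field on U ∩ B with ‖u‖_{X^{s,p}(U∩B)} < ∞ whose support is contained in the closure of U ∩ B_δ, and define ũ = u on U ∩ B and ũ = 0 on U \ B. Then there is a constant c, depending only on d, p, s, δ, such that ‖ũ‖_{X^{s,p}(U)} ≤ c ‖u‖_{X^{s,p}(U∩B)}. -/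
open MeasureTheory ENNReal NNReal RealInnerProductSpace Filter

noncomputable section

def Fker (d : ℕ) (s p : ℝ) (w : Euc d → Euc d) (x y : Euc d) : ℝ≥0∞ :=
  ENNReal.ofReal (|(inner ℝ (w x - w y) (x - y) : ℝ)| / ‖x - y‖) ^ p
    / (‖x - y‖₊ : ℝ≥0∞) ^ ((d : ℝ) + s * p)

lemma ker_measurable (d : ℕ) (r : ℝ) :
    Measurable (fun z : Euc d => ((‖z‖₊ : ℝ≥0∞) ^ r)⁻¹) :=
  (measurable_nnnorm.coe_nnreal_ennreal.pow_const r).inv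

lemma Fker_measurable (d : ℕ) (s p : ℝ) {w : Euc d → Euc d} (hw : Measurable w) :
    Measurable (Function.uncurry (Fker d s p w)) := by
  apply Measurable.div
  · apply Measurable.pow_const
    apply Measurable.ennreal_ofReal
    apply Measurable.div
    · exact (Measurable.inner ((hw.comp measurable_fst).sub (hw.comp measurable_snd))
        (measurable_fst.sub measurable_snd)).abs
    · exact (measurable_fst.sub measurable_snd).norm
  · exact ((measurable_fst.sub measurable_snd).nnnorm.coe_nnreal_ennreal).pow_const _

lemma Fker_symm (d : ℕ) (s p : ℝ) (w : Euc d → Euc d) (x y : Euc d) :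
    Fker d s p w x y = Fker d s p w y x := by
  unfold Fker
  rw [show w x - w y = -(w y - w x) from (neg_sub _ _).symm,
    show x - y = -(y - x) from (neg_sub _ _).symm, inner_neg_neg, norm_neg, nnnorm_neg]

lemma Fker_le (d : ℕ) (s p : ℝ) (hp : 0 < p) (w : Euc d → Euc d) (x y : Euc d) :
    Fker d s p w x y
      ≤ (‖w x - w y‖₊ : ℝ≥0∞) ^ p / (‖x - y‖₊ : ℝ≥0∞) ^ ((d : ℝ) + s * p) := by
  apply ENNReal.div_le_div_right
  have h1 : |(inner ℝ (w x - w y) (x - y) : ℝ)| / ‖x - y‖ ≤ ‖w x - w y‖ := by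
    rcases eq_or_ne (x - y) 0 with h | h
    · simp [h]
    · rw [div_le_iff₀ (norm_pos_iff.mpr h)]
      exact abs_real_inner_le_norm _ _
  calc ENNReal.ofReal (|(inner ℝ (w x - w y) (x - y) : ℝ)| / ‖x - y‖) ^ p
      ≤ ENNReal.ofReal ‖w x - w y‖ ^ p :=
        ENNReal.rpow_le_rpow (ENNReal.ofReal_le_ofReal h1) hp.le
    _ = (‖w x - w y‖₊ : ℝ≥0∞) ^ p := by rw [ofReal_norm, enorm_eq_nnnorm]

lemma Fker_zero (d : ℕ) (s p : ℝ) (hp : 0 < p) {w : Euc d → Euc d} {x y : Euc d}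
    (hx : w x = 0) (hy : w y = 0) : Fker d s p w x y = 0 := by
  unfold Fker
  rw [hx, hy, sub_zero]
  simp [ENNReal.zero_rpow_of_pos hp, ENNReal.zero_div]

lemma Kfin (d : ℕ) (r δ : ℝ) (hr : (d : ℝ) < r) (hδ : 0 < δ) :
    (∫⁻ z : Euc d, Set.indicator {z : Euc d | δ ≤ ‖z‖}
      (fun z => ((‖z‖₊ : ℝ≥0∞) ^ r)⁻¹) z) < ⊤ := by
  have hr0 : 0 < r := lt_of_le_of_lt (Nat.cast_nonneg d) hr
  have hfin : (∫⁻ z : Euc d, ENNReal.ofReal ((1 + ‖z‖) ^ (-r))) < ⊤ := by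
    have h : (Module.finrank ℝ (Euc d) : ℝ) < r := by
      simpa [finrank_euclideanSpace_fin] using hr
    exact finite_integral_one_add_norm h
  have hb : ∀ z : Euc d, Set.indicator {z : Euc d | δ ≤ ‖z‖}
      (fun z => ((‖z‖₊ : ℝ≥0∞) ^ r)⁻¹) z
      ≤ ENNReal.ofReal ((1 + 1/δ) ^ r) * ENNReal.ofReal ((1 + ‖z‖) ^ (-r)) := by
    intro z
    by_cases hz : z ∈ {z : Euc d | δ ≤ ‖z‖}
    · rw [Set.indicator_of_mem hz]
      have hzpos : 0 < ‖z‖ := lt_of_lt_of_le hδ hz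
      have h1 : ((‖z‖₊ : ℝ≥0∞) ^ r)⁻¹ = ENNReal.ofReal (‖z‖ ^ (-r)) := by
        rw [← enorm_eq_nnnorm, ← ofReal_norm, ENNReal.ofReal_rpow_of_pos hzpos,
          ← ENNReal.ofReal_inv_of_pos (Real.rpow_pos_of_pos hzpos r),
          ← Real.rpow_neg hzpos.le]
      rw [h1, ← ENNReal.ofReal_mul (by positivity)]
      apply ENNReal.ofReal_le_ofReal
      have hkey : 1 + ‖z‖ ≤ (1 + 1/δ) * ‖z‖ := by
        have h2 : 1 ≤ ‖z‖ / δ := (one_le_div hδ).mpr hz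
        have h3 : ‖z‖ / δ = (1/δ) * ‖z‖ := by ring
        nlinarith [h2, h3]
      have hAB : (1 + ‖z‖) ^ r ≤ (1 + 1/δ) ^ r * ‖z‖ ^ r := by
        calc (1 + ‖z‖) ^ r ≤ ((1 + 1/δ) * ‖z‖) ^ r :=
            Real.rpow_le_rpow (by positivity) hkey hr0.le
          _ = (1 + 1/δ) ^ r * ‖z‖ ^ r := Real.mul_rpow (by positivity) hzpos.le
      have hApos : 0 < ‖z‖ ^ r := Real.rpow_pos_of_pos hzpos r
      have hBpos : 0 < (1 + ‖z‖) ^ r := Real.rpow_pos_of_pos (by positivity) r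
      have hCpos : 0 < (1 + 1/δ) ^ r := Real.rpow_pos_of_pos (by positivity) r
      rw [Real.rpow_neg hzpos.le, Real.rpow_neg (by positivity : (0:ℝ) ≤ 1 + ‖z‖)]
      calc (‖z‖ ^ r)⁻¹ = (1 + 1/δ) ^ r * ((1 + 1/δ) ^ r * ‖z‖ ^ r)⁻¹ := by
            field_simp
        _ ≤ (1 + 1/δ) ^ r * ((1 + ‖z‖) ^ r)⁻¹ := by
            gcongr
    · rw [Set.indicator_of_notMem hz]
      exact zero_le
  calc (∫⁻ z : Euc d, Set.indicator {z : Euc d | δ ≤ ‖z‖}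
        (fun z => ((‖z‖₊ : ℝ≥0∞) ^ r)⁻¹) z)
      ≤ ∫⁻ z : Euc d, ENNReal.ofReal ((1 + 1/δ) ^ r) * ENNReal.ofReal ((1 + ‖z‖) ^ (-r)) :=
        lintegral_mono hb
    _ = ENNReal.ofReal ((1 + 1/δ) ^ r) * ∫⁻ z : Euc d, ENNReal.ofReal ((1 + ‖z‖) ^ (-r)) :=
        lintegral_const_mul' _ _ ENNReal.ofReal_ne_top
    _ < ⊤ := ENNReal.mul_lt_top ENNReal.ofReal_lt_top hfin

lemma Ktrans (d : ℕ) (r δ : ℝ) (x : Euc d) :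
    (∫⁻ y : Euc d, Set.indicator {y : Euc d | δ ≤ ‖x - y‖}
        (fun y => ((‖x - y‖₊ : ℝ≥0∞) ^ r)⁻¹) y)
      = ∫⁻ z : Euc d, Set.indicator {z : Euc d | δ ≤ ‖z‖}
        (fun z => ((‖z‖₊ : ℝ≥0∞) ^ r)⁻¹) z := by
  have hmp : MeasurePreserving (fun y : Euc d => x - y) volume volume :=
    Measure.measurePreserving_sub_left volume x
  have hmeas : Measurable (fun z : Euc d => Set.indicator {z : Euc d | δ ≤ ‖z‖}
      (fun z => ((‖z‖₊ : ℝ≥0∞) ^ r)⁻¹) z) :=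
    (ker_measurable d r).indicator (measurableSet_le measurable_const measurable_norm)
  rw [← hmp.lintegral_comp hmeas]
  apply lintegral_congr
  intro y
  by_cases hy : δ ≤ ‖x - y‖
  · rw [Set.indicator_of_mem (show y ∈ {y : Euc d | δ ≤ ‖x - y‖} from hy),
      Set.indicator_of_mem (show x - y ∈ {z : Euc d | δ ≤ ‖z‖} from hy)]
  · rw [Set.indicator_of_notMem (show y ∉ {y : Euc d | δ ≤ ‖x - y‖} from hy),
      Set.indicator_of_notMem (show x - y ∉ {z : Euc d | δ ≤ ‖z‖} from hy)]

theorem stmt10 (d : ℕ) (hd : 1 < d) (p s δ : ℝ) (hp : 1 < p) (hs0 : 0 < s) (hs1 : s < 1)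
    (hδ : 0 < δ) :
    ∃ c : ℝ, 0 < c ∧ ∀ (B U : Set (Euc d)), IsOpen B → IsOpen U →
      (U ∩ innerSet d δ B).Nonempty → (U \ B).Nonempty →
      ∀ u : Euc d → Euc d, Measurable u →
        xNorm d s p (U ∩ B) u ≠ ⊤ →
        (∀ x ∈ (U ∩ B) \ closure (U ∩ innerSet d δ B), u x = 0) →
        xNorm d s p U (Set.indicator B u) ≤ ENNReal.ofReal c * xNorm d s p (U ∩ B) u := by
  classical
  have hp0 : 0 < p := lt_trans one_pos hp
  have hrd : (d : ℝ) < (d : ℝ) + s * p := lt_add_of_pos_right _ (mul_pos hs0 hp0)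
  set K : ℝ≥0∞ := ∫⁻ z : Euc d, Set.indicator {z : Euc d | δ ≤ ‖z‖}
      (fun z => ((‖z‖₊ : ℝ≥0∞) ^ ((d : ℝ) + s * p))⁻¹) z with hKdef
  have hKfin : K < ⊤ := Kfin d _ δ hrd hδ
  set M : ℝ≥0∞ := 1 + 2 * K with hMdef
  have hMfin : M ≠ ⊤ := by
    simp only [hMdef]
    exact (ENNReal.add_lt_top.mpr ⟨ENNReal.one_lt_top,
      ENNReal.mul_lt_top ENNReal.ofNat_lt_top hKfin⟩).ne
  have hM1 : 1 ≤ M := le_self_add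
  have hMt : 0 < M.toReal := ENNReal.toReal_pos (zero_lt_one.trans_le hM1).ne' hMfin
  refine ⟨M.toReal ^ (1 / p), Real.rpow_pos_of_pos hMt _, ?_⟩
  have hc : ENNReal.ofReal (M.toReal ^ (1 / p)) = M ^ (1 / p) := by
    rw [← ENNReal.ofReal_rpow_of_pos hMt, ENNReal.ofReal_toReal hMfin]
  intro B U hB hU hne1 hne2 u hu hfin hsupp
  set ut : Euc d → Euc d := Set.indicator B u with hutdef
  have hut : Measurable ut := hu.indicator hB.measurableSet
  set F : Euc d → Euc d → ℝ≥0∞ := Fker d s p ut with hFdef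
  have hF : Measurable (Function.uncurry F) := Fker_measurable d s p hut
  set A : ℝ≥0∞ := lpIntP d p (U ∩ B) u with hAdef
  set X : ℝ≥0∞ := xSemiP d s p (U ∩ B) u with hXdef
  have hUmB : MeasurableSet (U ∩ B) := (hU.inter hB).measurableSet
  have hUdB : MeasurableSet (U \ B) := hU.measurableSet.diff hB.measurableSet
  have hdisj : Disjoint (U ∩ B) (U \ B) := Set.disjoint_left.mpr fun a ha hb => hb.2 ha.2
  have hsplitInt : ∀ f : Euc d → ℝ≥0∞,
      (∫⁻ x in U, f x) = (∫⁻ x in U ∩ B, f x) + ∫⁻ x in U \ B, f x := by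
    intro f
    conv_lhs => rw [← Set.inter_union_diff U B]
    rw [lintegral_union hUdB hdisj]
  -- support/distance estimate
  have hBneU : B ≠ Set.univ := by
    obtain ⟨y, hy⟩ := hne2
    exact fun h => hy.2 (h ▸ Set.mem_univ y)
  have hdist : ∀ x ∈ U ∩ B, u x ≠ 0 → ∀ y ∈ U \ B, δ ≤ ‖x - y‖ := by
    intro x hx hx0 y hy
    have hxc : x ∈ closure (U ∩ innerSet d δ B) := by
      by_contra h
      exact hx0 (hsupp x ⟨hx, h⟩)
    have hxd : δ ≤ Metric.infDist x (frontier B) := by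
      have hclosed : IsClosed {z : Euc d | δ ≤ Metric.infDist z (frontier B)} :=
        isClosed_le continuous_const (Metric.continuous_infDist_pt _)
      have hsub : U ∩ innerSet d δ B ⊆ {z : Euc d | δ ≤ Metric.infDist z (frontier B)} :=
        fun z hz => le_of_lt hz.2.2
      exact closure_minimal hsub hclosed hxc
    obtain ⟨w, hw, hweq⟩ := exists_mem_frontier_infDist_compl_eq_dist hx.2 hBneU
    have h1 : Metric.infDist x (frontier B) ≤ dist x w := Metric.infDist_le_dist_of_mem hw
    have h2 : Metric.infDist x Bᶜ ≤ dist x y := Metric.infDist_le_dist_of_mem hy.2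
    rw [← dist_eq_norm]
    calc δ ≤ Metric.infDist x (frontier B) := hxd
      _ ≤ dist x w := h1
      _ = Metric.infDist x Bᶜ := hweq.symm
      _ ≤ dist x y := h2
  -- L^p part
  have hlp : lpIntP d p U ut = A := by
    rw [hAdef, lpIntP, lpIntP, hsplitInt]
    have h1 : (∫⁻ x in U ∩ B, (‖ut x‖₊ : ℝ≥0∞) ^ p) = ∫⁻ x in U ∩ B, (‖u x‖₊ : ℝ≥0∞) ^ p :=
      setLIntegral_congr_fun hUmB (fun x hx => by
        rw [hutdef, Set.indicator_of_mem hx.2])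
    have h2 : (∫⁻ x in U \ B, (‖ut x‖₊ : ℝ≥0∞) ^ p) = 0 := by
      have : ∀ x ∈ U \ B, (‖ut x‖₊ : ℝ≥0∞) ^ p = 0 := fun x hx => by
        rw [hutdef, Set.indicator_of_notMem hx.2]
        simp [ENNReal.zero_rpow_of_pos hp0]
      rw [setLIntegral_congr_fun hUdB this, lintegral_zero]
    rw [h1, h2, add_zero]
  -- inner-integral bound on cross terms
  have hT12inner : ∀ x ∈ U ∩ B, (∫⁻ y in U \ B, F x y) ≤ (‖u x‖₊ : ℝ≥0∞) ^ p * K := by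
    intro x hx
    by_cases hx0 : u x = 0
    · have hz : ∀ y ∈ U \ B, F x y = 0 := by
        intro y hy
        exact Fker_zero d s p hp0 (by rw [hutdef, Set.indicator_of_mem hx.2]; exact hx0)
          (by rw [hutdef]; exact Set.indicator_of_notMem hy.2 u)
      rw [setLIntegral_congr_fun hUdB hz, lintegral_zero]
      exact zero_le
    · have hd' : ∀ y ∈ U \ B, δ ≤ ‖x - y‖ := hdist x hx hx0
      have hb : ∀ y ∈ U \ B, F x y ≤ (‖u x‖₊ : ℝ≥0∞) ^ p *
          Set.indicator {y : Euc d | δ ≤ ‖x - y‖}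
            (fun y => ((‖x - y‖₊ : ℝ≥0∞) ^ ((d : ℝ) + s * p))⁻¹) y := by
        intro y hy
        rw [Set.indicator_of_mem (show y ∈ {y : Euc d | δ ≤ ‖x - y‖} from hd' y hy)]
        calc F x y ≤ (‖ut x - ut y‖₊ : ℝ≥0∞) ^ p / (‖x - y‖₊ : ℝ≥0∞) ^ ((d : ℝ) + s * p) :=
            Fker_le d s p hp0 ut x y
          _ = (‖u x‖₊ : ℝ≥0∞) ^ p * ((‖x - y‖₊ : ℝ≥0∞) ^ ((d : ℝ) + s * p))⁻¹ := by
            rw [hutdef, Set.indicator_of_mem hx.2, Set.indicator_of_notMem hy.2, sub_zero,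
              div_eq_mul_inv]
      have hmeas2 : Measurable (fun y : Euc d => (‖u x‖₊ : ℝ≥0∞) ^ p *
          Set.indicator {y : Euc d | δ ≤ ‖x - y‖}
            (fun y => ((‖x - y‖₊ : ℝ≥0∞) ^ ((d : ℝ) + s * p))⁻¹) y) := by
        apply Measurable.const_mul
        exact (((measurable_const.sub measurable_id).nnnorm.coe_nnreal_ennreal.pow_const
          _).inv).indicator
          (measurableSet_le measurable_const (measurable_const.sub measurable_id).norm)
      calc (∫⁻ y in U \ B, F x y)
          ≤ ∫⁻ y in U \ B, (‖u x‖₊ : ℝ≥0∞) ^ p *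
              Set.indicator {y : Euc d | δ ≤ ‖x - y‖}
                (fun y => ((‖x - y‖₊ : ℝ≥0∞) ^ ((d : ℝ) + s * p))⁻¹) y :=
            setLIntegral_mono hmeas2 hb
        _ = (‖u x‖₊ : ℝ≥0∞) ^ p * ∫⁻ y in U \ B,
              Set.indicator {y : Euc d | δ ≤ ‖x - y‖}
                (fun y => ((‖x - y‖₊ : ℝ≥0∞) ^ ((d : ℝ) + s * p))⁻¹) y := by
            rw [lintegral_const_mul]
            exact (ker_measurable d _).comp (measurable_const.sub measurable_id) |>.indicator
              (measurableSet_le measurable_const (measurable_const.sub measurable_id).norm)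
        _ ≤ (‖u x‖₊ : ℝ≥0∞) ^ p * ∫⁻ y,
              Set.indicator {y : Euc d | δ ≤ ‖x - y‖}
                (fun y => ((‖x - y‖₊ : ℝ≥0∞) ^ ((d : ℝ) + s * p))⁻¹) y := by
            gcongr
            exact Measure.restrict_le_self
        _ = (‖u x‖₊ : ℝ≥0∞) ^ p * K := by rw [Ktrans d ((d : ℝ) + s * p) δ x, hKdef]
  have hT12 : (∫⁻ x in U ∩ B, ∫⁻ y in U \ B, F x y) ≤ K * A := by
    calc (∫⁻ x in U ∩ B, ∫⁻ y in U \ B, F x y)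
        ≤ ∫⁻ x in U ∩ B, (‖u x‖₊ : ℝ≥0∞) ^ p * K :=
          setLIntegral_mono ((hu.nnnorm.coe_nnreal_ennreal.pow_const p).mul_const K) hT12inner
      _ = (∫⁻ x in U ∩ B, (‖u x‖₊ : ℝ≥0∞) ^ p) * K := lintegral_mul_const' K _ hKfin.ne
      _ = K * A := by rw [mul_comm]; rfl
  have hT22 : (∫⁻ x in U \ B, ∫⁻ y in U \ B, F x y) = 0 := by
    have h0 : ∀ x ∈ U \ B, (∫⁻ y in U \ B, F x y) = 0 := by
      intro x hx
      have hz : ∀ y ∈ U \ B, F x y = 0 := fun y hy =>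
        Fker_zero d s p hp0 (by rw [hutdef]; exact Set.indicator_of_notMem hx.2 u)
          (by rw [hutdef]; exact Set.indicator_of_notMem hy.2 u)
      rw [setLIntegral_congr_fun hUdB hz, lintegral_zero]
    rw [setLIntegral_congr_fun hUdB h0, lintegral_zero]
  have hT11 : (∫⁻ x in U ∩ B, ∫⁻ y in U ∩ B, F x y) = X := by
    rw [hXdef, xSemiP]
    apply setLIntegral_congr_fun hUmB
    refine fun x hx => ?_
    apply setLIntegral_congr_fun hUmB
    refine fun y hy => ?_
    rw [hFdef]
    unfold Fker
    rw [hutdef, Set.indicator_of_mem hx.2, Set.indicator_of_mem hy.2]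
  have hT21 : (∫⁻ x in U \ B, ∫⁻ y in U ∩ B, F x y)
      = ∫⁻ x in U ∩ B, ∫⁻ y in U \ B, F x y := by
    have hstep : (∫⁻ x in U \ B, ∫⁻ y in U ∩ B, F x y)
        = ∫⁻ x in U \ B, ∫⁻ y in U ∩ B, F y x :=
      lintegral_congr fun x => lintegral_congr fun y => Fker_symm d s p ut x y
    rw [hstep]
    exact lintegral_lintegral_swap ((hF.comp measurable_swap).aemeasurable)
  -- measurable sections for splitting
  have hsec1 : Measurable fun x => ∫⁻ y in U ∩ B, F x y :=
    hF.lintegral_prod_right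
  have hsec2 : Measurable fun x => ∫⁻ y in U \ B, F x y :=
    hF.lintegral_prod_right
  have hsemi : xSemiP d s p U ut ≤ X + (K * A + K * A) := by
    have heq : xSemiP d s p U ut
        = ((∫⁻ x in U ∩ B, ∫⁻ y in U ∩ B, F x y) + ∫⁻ x in U ∩ B, ∫⁻ y in U \ B, F x y)
          + ((∫⁻ x in U \ B, ∫⁻ y in U ∩ B, F x y) + ∫⁻ x in U \ B, ∫⁻ y in U \ B, F x y) := by
      have h1 : xSemiP d s p U ut = ∫⁻ x in U, ∫⁻ y in U, F x y := rfl
      rw [h1, hsplitInt fun x => ∫⁻ y in U, F x y]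
      congr 1
      · rw [← lintegral_add_left hsec1]
        exact lintegral_congr fun x => hsplitInt fun y => F x y
      · rw [← lintegral_add_left hsec1]
        exact lintegral_congr fun x => hsplitInt fun y => F x y
    rw [heq, hT11, hT22, hT21, add_zero, add_assoc]
    exact add_le_add le_rfl (add_le_add hT12 hT12)
  -- combine
  have htotal : lpIntP d p U ut + xSemiP d s p U ut ≤ M * (A + X) := by
    have h1 : lpIntP d p U ut + xSemiP d s p U ut ≤ A + (X + (K * A + K * A)) :=
      add_le_add hlp.le hsemi
    have h2 : A + (X + (K * A + K * A)) ≤ M * (A + X) := by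
      have he : A + (X + (K * A + K * A)) = (A + X) + 2 * K * A := by ring
      have he2 : M * (A + X) = (A + X) + 2 * K * (A + X) := by rw [hMdef]; ring
      rw [he, he2]
      exact add_le_add le_rfl (by gcongr; exact le_self_add)
    exact h1.trans h2
  have hnonneg : (0 : ℝ) ≤ 1 / p := le_of_lt (by positivity)
  calc xNorm d s p U ut = (lpIntP d p U ut + xSemiP d s p U ut) ^ (1 / p) := rfl
    _ ≤ (M * (A + X)) ^ (1 / p) := ENNReal.rpow_le_rpow htotal hnonneg
    _ = M ^ (1 / p) * (A + X) ^ (1 / p) := ENNReal.mul_rpow_of_nonneg _ _ hnonneg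
    _ = ENNReal.ofReal (M.toReal ^ (1 / p)) * xNorm d s p (U ∩ B) u := by
        rw [hc]
        unfold xNorm
        rw [← hAdef, ← hXdef]
end
end

section
/- Let d > 1, p ∈ (1,∞), s ∈ (0,1), let f: ℝ^{d−1} → ℝ be Lipschitz with constant L, let D be the epigraph of f, and set C(L) = √(1 + L(L+1)). For a vector field u on D define v on the half-space ℝ^d_+ by v(w', w_d) = u(w', w_d + f(w')). Then C(L)^{−(3d+sp)} |v|_{W^{s,p}(ℝ^d_+)}^p ≤ |u|_{W^{s,p}(D)}^p ≤ C(L)^{3d+sp} |v|_{W^{s,p}(ℝ^d_+)}^p. -/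
open MeasureTheory ENNReal NNReal RealInnerProductSpace Filter

noncomputable section

section AuxStmt15

variable {n : ℕ}

lemma proj'_shift (f : Euc n → ℝ) (w : Euc (n+1)) :
    proj' (n+1) (shiftGraph (n+1) f w) = proj' (n+1) w := by
  ext i
  show (if ((Fin.castLE (Nat.sub_le (n+1) 1) i : Fin (n+1)) : ℕ) = n+1-1 then _ else _) = _
  rw [if_neg (by simpa using i.isLt.ne)]
  rfl

lemma shift_neg_shift (f : Euc n → ℝ) (w : Euc (n+1)) :
    shiftGraph (n+1) (-f) (shiftGraph (n+1) f w) = w := by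
  ext i
  by_cases h : (i : ℕ) = n
  · show (if (i : ℕ) = n+1-1 then (shiftGraph (n+1) f w) i + (-f) (proj' (n+1) (shiftGraph (n+1) f w)) else (shiftGraph (n+1) f w) i) = w i
    rw [proj'_shift]
    simp only [shiftGraph, Nat.add_sub_cancel, proj'_shift, if_pos h, Pi.neg_apply]
    ring
  · simp only [shiftGraph, Nat.add_sub_cancel, if_neg h]

lemma shift_sub (f : Euc n → ℝ) (w v : Euc (n+1)) :
    shiftGraph (n+1) f w - shiftGraph (n+1) f v
      = (w - v) + (f (proj' (n+1) w) - f (proj' (n+1) v)) • EuclideanSpace.single (Fin.last n) (1:ℝ) := by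
  ext i
  have h1 : (((w - v) + (f (proj' (n+1) w) - f (proj' (n+1) v)) • EuclideanSpace.single (Fin.last n) (1:ℝ)) : Euc (n+1)) i
      = (w i - v i) + (f (proj' (n+1) w) - f (proj' (n+1) v)) * (if i = Fin.last n then (1:ℝ) else 0) := by
    simp [EuclideanSpace.single_apply]
  rw [show (shiftGraph (n+1) f w - shiftGraph (n+1) f v) i = shiftGraph (n+1) f w i - shiftGraph (n+1) f v i from rfl, h1]
  by_cases h : (i : ℕ) = n
  · rw [if_pos (Fin.ext (by simpa using h))]
    simp only [shiftGraph, Nat.add_sub_cancel, if_pos h]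
    ring
  · rw [if_neg (fun hh => h (by simpa using congrArg Fin.val hh))]
    simp only [shiftGraph, Nat.add_sub_cancel, if_neg h]
    ring

lemma norm_split (a : Euc (n+1)) :
    ‖proj' (n+1) a‖^2 + (a (Fin.last n))^2 = ‖a‖^2 := by
  have h1 : ‖a‖^2 = ∑ i : Fin (n+1), (a i)^2 := by
    rw [EuclideanSpace.norm_eq, Real.sq_sqrt (by positivity)]
    simp [sq_abs]
  have h2 : ‖proj' (n+1) a‖^2 = ∑ i : Fin n, (a (Fin.castSucc i))^2 := by
    rw [EuclideanSpace.norm_eq, Real.sq_sqrt (by positivity)]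
    simp [sq_abs]
    rfl
  rw [h1, h2, Fin.sum_univ_castSucc]

lemma proj'_sub (x y : Euc (n+1)) :
    proj' (n+1) (x - y) = proj' (n+1) x - proj' (n+1) y := by ext i; rfl

lemma one_le_CL {L : ℝ} (hL : 0 ≤ L) : 1 ≤ CL L := by
  have h := Real.sqrt_le_sqrt (show (1:ℝ) ≤ 1 + L * (L + 1) by nlinarith)
  simpa [CL] using h

lemma CL_sq {L : ℝ} (hL : 0 ≤ L) : CL L ^ 2 = 1 + L * (L + 1) := Real.sq_sqrt (by nlinarith)

lemma shift_norm_le {L : ℝ} (hL : 0 ≤ L) {f : Euc n → ℝ}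
    (hf : LipschitzWith (Real.toNNReal L) f) (w v : Euc (n+1)) :
    ‖shiftGraph (n+1) f w - shiftGraph (n+1) f v‖ ≤ CL L * ‖w - v‖ := by
  set a : Euc (n+1) := w - v with ha
  set δ : ℝ := f (proj' (n+1) w) - f (proj' (n+1) v) with hδ
  have habs : |δ| ≤ L * ‖proj' (n+1) a‖ := by
    have := hf.dist_le_mul (proj' (n+1) w) (proj' (n+1) v)
    rw [Real.coe_toNNReal L hL] at this
    rwa [Real.dist_eq, dist_eq_norm, ← proj'_sub] at this
  have hsq : ‖shiftGraph (n+1) f w - shiftGraph (n+1) f v‖^2 ≤ (CL L)^2 * ‖a‖^2 := by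
    rw [shift_sub, ← ha, ← hδ]
    rw [norm_add_sq_real]
    have hi : ⟪a, δ • EuclideanSpace.single (Fin.last n) (1:ℝ)⟫ = δ * a (Fin.last n) := by
      rw [real_inner_smul_right, EuclideanSpace.inner_single_right]
      simp [mul_comm]
    have hns : ‖δ • EuclideanSpace.single (Fin.last n) (1:ℝ)‖ = |δ| := by
      rw [norm_smul, EuclideanSpace.norm_single, Real.norm_eq_abs, norm_one, mul_one]
    rw [hi, hns, CL_sq hL]
    have hsplit := norm_split a
    have h1 : |δ|^2 = δ^2 := sq_abs δ
    have h2 : δ * a (Fin.last n) ≤ |δ| * |a (Fin.last n)| := by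
      calc δ * a (Fin.last n) ≤ |δ * a (Fin.last n)| := le_abs_self _
      _ = |δ| * |a (Fin.last n)| := abs_mul _ _
    have h3 : 0 ≤ ‖proj' (n+1) a‖ := norm_nonneg _
    have h4 : 0 ≤ |a (Fin.last n)| := abs_nonneg _
    have h5 : |a (Fin.last n)|^2 = (a (Fin.last n))^2 := sq_abs _
    have h6 : |δ| * |a (Fin.last n)| ≤ L * ‖proj' (n+1) a‖ * |a (Fin.last n)| :=
      mul_le_mul_of_nonneg_right habs h4
    have h7 : |δ|^2 ≤ (L * ‖proj' (n+1) a‖)^2 := pow_le_pow_left₀ (abs_nonneg δ) habs 2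
    nlinarith [mul_nonneg hL (sq_nonneg (‖proj' (n+1) a‖ - |a (Fin.last n)|)),
      mul_nonneg (mul_nonneg hL hL) (sq_nonneg (a (Fin.last n)))]
  have h0 : 0 ≤ CL L * ‖a‖ := mul_nonneg (by linarith [one_le_CL hL]) (norm_nonneg _)
  exact (pow_le_pow_iff_left₀ (norm_nonneg _) h0 two_ne_zero).mp (by rw [mul_pow]; exact hsq)

/-- the shear on `ℝ × (Fin n → ℝ)` as a measurable equiv -/
def shear (g : (Fin n → ℝ) → ℝ) (hg : Measurable g) : (ℝ × (Fin n → ℝ)) ≃ᵐ (ℝ × (Fin n → ℝ)) where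
  toFun z := (z.1 + g z.2, z.2)
  invFun z := (z.1 - g z.2, z.2)
  left_inv z := by simp
  right_inv z := by simp
  measurable_toFun := (measurable_fst.add (hg.comp measurable_snd)).prodMk measurable_snd
  measurable_invFun := (measurable_fst.sub (hg.comp measurable_snd)).prodMk measurable_snd

lemma shear_mp (g : (Fin n → ℝ) → ℝ) (hg : Measurable g) :
    MeasurePreserving (shear g hg) (volume : Measure (ℝ × (Fin n → ℝ))) volume := by
  have h1 : MeasurePreserving (fun p : (Fin n → ℝ) × ℝ => (p.1, p.2 + g p.1))
      ((volume : Measure (Fin n → ℝ)).prod (volume : Measure ℝ))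
      ((volume : Measure (Fin n → ℝ)).prod (volume : Measure ℝ)) :=
    MeasurePreserving.skew_product (g := fun y t => t + g y) (MeasurePreserving.id _)
      (by exact measurable_snd.add (hg.comp measurable_fst))
      (Filter.Eventually.of_forall fun y => map_add_right_eq_self volume (g y))
  have h2 : ⇑(shear g hg)
      = Prod.swap ∘ (fun p : (Fin n → ℝ) × ℝ => (p.1, p.2 + g p.1)) ∘ Prod.swap := rfl
  rw [Measure.volume_eq_prod, h2]
  exact (Measure.measurePreserving_swap).comp (h1.comp Measure.measurePreserving_swap)

def projEquiv (n : ℕ) : Euc (n+1) ≃ᵐ (ℝ × (Fin n → ℝ)) :=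
  ((MeasurableEquiv.toLp 2 (Fin (n+1) → ℝ)).symm).trans
    (MeasurableEquiv.piFinSuccAbove (fun _ => ℝ) (Fin.last n))

lemma projEquiv_mp : MeasurePreserving (projEquiv n) (volume : Measure (Euc (n+1))) volume := by
  have h2 := volume_preserving_piFinSuccAbove (fun _ : Fin (n+1) => ℝ) (Fin.last n)
  exact h2.comp (EuclideanSpace.volume_preserving_symm_measurableEquiv_toLp (Fin (n+1)))

def gOf (f : Euc n → ℝ) : (Fin n → ℝ) → ℝ :=
  f ∘ ⇑((MeasurableEquiv.toLp 2 (Fin n → ℝ)).symm).symm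

lemma gOf_meas {L : ℝ≥0} {f : Euc n → ℝ} (hf : LipschitzWith L f) : Measurable (gOf f) :=
  (hf.continuous.measurable).comp ((MeasurableEquiv.toLp 2 (Fin n → ℝ)).symm).symm.measurable

def shiftEquiv (f : Euc n → ℝ) (hg : Measurable (gOf f)) : Euc (n+1) ≃ᵐ Euc (n+1) :=
  (projEquiv n).trans ((shear (gOf f) hg).trans (projEquiv n).symm)

lemma shiftEquiv_eq (f : Euc n → ℝ) (hg : Measurable (gOf f)) :
    ⇑(shiftEquiv f hg) = shiftGraph (n+1) f := by
  funext x
  apply (projEquiv n).injective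
  have h1 : (projEquiv n) ((shiftEquiv f hg) x) = shear (gOf f) hg ((projEquiv n) x) := by
    simp [shiftEquiv]
  rw [h1]
  have hfst : ((projEquiv n) (shiftGraph (n+1) f x)).1 = x (Fin.last n) + f (proj' (n+1) x) := by
    show shiftGraph (n+1) f x (Fin.last n) = _
    simp [shiftGraph]
  have hsnd : ((projEquiv n) (shiftGraph (n+1) f x)).2 = ((projEquiv n) x).2 := by
    show (fun j => shiftGraph (n+1) f x ((Fin.last n).succAbove j)) = fun j => x ((Fin.last n).succAbove j)
    funext j
    rw [Fin.succAbove_last]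
    show (if ((Fin.castSucc j : Fin (n+1)) : ℕ) = n+1-1 then _ else _) = _
    rw [if_neg (by simpa using j.isLt.ne)]
  have hg1 : gOf f ((projEquiv n) x).2 = f (proj' (n+1) x) := by
    show f (((MeasurableEquiv.toLp 2 (Fin n → ℝ)).symm).symm (fun j => x ((Fin.last n).succAbove j))) = _
    congr 1
    ext j
    show x ((Fin.last n).succAbove j) = x (Fin.castLE (Nat.sub_le (n+1) 1) j)
    rw [Fin.succAbove_last]
    rfl
  apply Prod.ext
  · rw [hfst]
    show ((projEquiv n) x).1 + gOf f ((projEquiv n) x).2 = _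
    rw [hg1]
    rfl
  · rw [hsnd]; rfl

lemma shift_mp (f : Euc n → ℝ) (hg : Measurable (gOf f)) :
    MeasurePreserving (shiftGraph (n+1) f) (volume : Measure (Euc (n+1))) volume := by
  rw [← shiftEquiv_eq f hg]
  exact (projEquiv_mp.symm _).comp ((shear_mp (gOf f) hg).comp projEquiv_mp)

lemma shift_emb (f : Euc n → ℝ) (hg : Measurable (gOf f)) :
    MeasurableEmbedding (shiftGraph (n+1) f) := by
  rw [← shiftEquiv_eq f hg]
  exact (shiftEquiv f hg).measurableEmbedding

lemma shift_preimage (f : Euc n → ℝ) (hd : 0 < n+1) :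
    shiftGraph (n+1) f ⁻¹' (epigraph (n+1) hd f) = halfSpace (n+1) hd := by
  ext x
  have hproj : proj' (n+1) (shiftGraph (n+1) f x) = proj' (n+1) x := proj'_shift f x
  have hlast : shiftGraph (n+1) f x ⟨n+1-1, Nat.sub_lt hd Nat.one_pos⟩
      = x ⟨n+1-1, Nat.sub_lt hd Nat.one_pos⟩ + f (proj' (n+1) x) := by
    show (if _ then _ else _) = _
    rw [if_pos rfl]
  simp only [Set.mem_preimage, epigraph, halfSpace, Set.mem_setOf_eq, hproj, hlast]
  constructor <;> intro h <;> linarith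

lemma ofReal_neg_rpow {C : ℝ} (hC : 0 < C) (β : ℝ) :
    ENNReal.ofReal (C ^ (-β)) = (ENNReal.ofReal (C ^ β))⁻¹ := by
  rw [Real.rpow_neg hC.le, ENNReal.ofReal_inv_of_pos (Real.rpow_pos_of_pos hC β)]

lemma ennKey (N : ℝ≥0∞) {a b C : ℝ} (hC : 1 ≤ C)
    (hab : a ≤ C * b) {α β : ℝ} (hα : 0 < α) (hαβ : α ≤ β) :
    ENNReal.ofReal (C ^ (-β)) * (N / (ENNReal.ofReal b) ^ α) ≤ N / (ENNReal.ofReal a) ^ α := by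
  have hC0 : (0:ℝ) < C := lt_of_lt_of_le one_pos hC
  have hcβpos : (0:ℝ) < C ^ β := Real.rpow_pos_of_pos hC0 β
  set c : ℝ≥0∞ := ENNReal.ofReal (C ^ β) with hc
  have hc0 : c ≠ 0 := by simp [hc, hcβpos]
  have hcT : c ≠ ⊤ := ENNReal.ofReal_ne_top
  have step : (ENNReal.ofReal a) ^ α ≤ c * (ENNReal.ofReal b) ^ α := by
    calc (ENNReal.ofReal a) ^ α ≤ (ENNReal.ofReal C * ENNReal.ofReal b) ^ α := by
          refine ENNReal.rpow_le_rpow ?_ hα.le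
          rw [← ENNReal.ofReal_mul hC0.le]
          exact ENNReal.ofReal_le_ofReal hab
      _ = (ENNReal.ofReal C) ^ α * (ENNReal.ofReal b) ^ α :=
          ENNReal.mul_rpow_of_nonneg _ _ hα.le
      _ ≤ (ENNReal.ofReal C) ^ β * (ENNReal.ofReal b) ^ α := by
          gcongr
          · exact ENNReal.one_le_ofReal.2 hC
      _ = c * (ENNReal.ofReal b) ^ α := by
          rw [hc, ← ENNReal.ofReal_rpow_of_pos hC0]
  calc ENNReal.ofReal (C ^ (-β)) * (N / (ENNReal.ofReal b) ^ α)
      = c⁻¹ * (N * ((ENNReal.ofReal b) ^ α)⁻¹) := by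
        rw [ofReal_neg_rpow hC0, div_eq_mul_inv]
    _ = N / (c * (ENNReal.ofReal b) ^ α) := by
        rw [div_eq_mul_inv, ENNReal.mul_inv (Or.inl hc0) (Or.inl hcT)]
        ring
    _ ≤ N / (ENNReal.ofReal a) ^ α := ENNReal.div_le_div_left step N

lemma ennKey2 (N : ℝ≥0∞) {a b C : ℝ} (hC : 1 ≤ C)
    (hab : b ≤ C * a) {α β : ℝ} (hα : 0 < α) (hαβ : α ≤ β) :
    N / (ENNReal.ofReal a) ^ α ≤ ENNReal.ofReal (C ^ β) * (N / (ENNReal.ofReal b) ^ α) := by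
  have hC0 : (0:ℝ) < C := lt_of_lt_of_le one_pos hC
  have key := ennKey N hC hab hα hαβ
  have := mul_le_mul_right key (ENNReal.ofReal (C ^ β))
  rwa [← mul_assoc, ofReal_neg_rpow hC0,
    ENNReal.mul_inv_cancel (by simp [Real.rpow_pos_of_pos hC0]) ENNReal.ofReal_ne_top,
    one_mul] at this

end AuxStmt15

theorem stmt15 (d : ℕ) (hd : 1 < d) (p s L : ℝ) (hp : 1 < p) (hs0 : 0 < s) (hs1 : s < 1)
    (hL : 0 ≤ L) (f : Euc (d - 1) → ℝ) (hf : LipschitzWith (Real.toNNReal L) f)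
    (u : Euc d → Euc d) (hu : Measurable u) :
    ENNReal.ofReal (CL L ^ (-(3 * (d : ℝ) + s * p)))
        * wSemiP d s p (halfSpace d (by omega)) (u ∘ shiftGraph d f)
      ≤ wSemiP d s p (epigraph d (by omega) f) u ∧
    wSemiP d s p (epigraph d (by omega) f) u
      ≤ ENNReal.ofReal (CL L ^ (3 * (d : ℝ) + s * p))
        * wSemiP d s p (halfSpace d (by omega)) (u ∘ shiftGraph d f) := by
  obtain ⟨n, rfl⟩ : ∃ n, d = n + 1 := ⟨d - 1, by omega⟩
  have hdpos : 0 < n + 1 := by omega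
  set S := shiftGraph (n+1) f with hS
  set H := halfSpace (n+1) hdpos with hH
  set D := epigraph (n+1) hdpos f with hD
  set α : ℝ := ((n+1 : ℕ) : ℝ) + s * p with hαdef
  set β : ℝ := 3 * ((n+1 : ℕ) : ℝ) + s * p with hβdef
  have hcast : (0:ℝ) ≤ ((n+1 : ℕ) : ℝ) := Nat.cast_nonneg _
  have hsp : 0 < s * p := mul_pos hs0 (lt_trans one_pos hp)
  have hα : 0 < α := by rw [hαdef]; positivity
  have hαβ : α ≤ β := by rw [hαdef, hβdef]; linarith
  have hC1 : 1 ≤ CL L := one_le_CL hL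
  have hg : Measurable (gOf (n := n) f) := gOf_meas (n := n) hf
  have hmp : MeasurePreserving S volume volume := shift_mp (n := n) f hg
  have hemb : MeasurableEmbedding S := shift_emb (n := n) f hg
  have hpre : S ⁻¹' D = H := shift_preimage (n := n) f hdpos
  have hfwd : ∀ w v : Euc (n+1), ‖S w - S v‖ ≤ CL L * ‖w - v‖ :=
    fun w v => shift_norm_le (n := n) hL hf w v
  have hnegf : LipschitzWith (Real.toNNReal L) (-(f : Euc n → ℝ)) := by
    exact LipschitzWith.neg hf
  have hrev : ∀ w v : Euc (n+1), ‖w - v‖ ≤ CL L * ‖S w - S v‖ := by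
    intro w v
    have h := shift_norm_le (n := n) hL hnegf (S w) (S v)
    rwa [hS, shift_neg_shift, shift_neg_shift] at h
  -- change of variables
  have cov : wSemiP (n+1) s p D u
      = ∫⁻ w in H, ∫⁻ v in H,
          (‖u (S w) - u (S v)‖₊ : ℝ≥0∞) ^ p / (‖S w - S v‖₊ : ℝ≥0∞) ^ α := by
    have outer := hmp.setLIntegral_comp_preimage_emb hemb
      (fun x => ∫⁻ y in D, (‖u x - u y‖₊ : ℝ≥0∞) ^ p / (‖x - y‖₊ : ℝ≥0∞) ^ α) D
    rw [hpre] at outer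
    have inner : ∀ w : Euc (n+1),
        (∫⁻ y in D, (‖u (S w) - u y‖₊ : ℝ≥0∞) ^ p / (‖S w - y‖₊ : ℝ≥0∞) ^ α)
          = ∫⁻ v in H, (‖u (S w) - u (S v)‖₊ : ℝ≥0∞) ^ p / (‖S w - S v‖₊ : ℝ≥0∞) ^ α := by
      intro w
      have h := hmp.setLIntegral_comp_preimage_emb hemb
        (fun y => (‖u (S w) - u y‖₊ : ℝ≥0∞) ^ p / (‖S w - y‖₊ : ℝ≥0∞) ^ α) D
      rw [hpre] at h
      exact h.symm
    calc wSemiP (n+1) s p D u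
        = ∫⁻ x in D, ∫⁻ y in D, (‖u x - u y‖₊ : ℝ≥0∞) ^ p / (‖x - y‖₊ : ℝ≥0∞) ^ α := rfl
      _ = ∫⁻ w in H, ∫⁻ y in D, (‖u (S w) - u y‖₊ : ℝ≥0∞) ^ p / (‖S w - y‖₊ : ℝ≥0∞) ^ α :=
          outer.symm
      _ = _ := lintegral_congr fun w => inner w
  have hUdef : wSemiP (n+1) s p H (u ∘ S)
      = ∫⁻ w in H, ∫⁻ v in H,
          (‖u (S w) - u (S v)‖₊ : ℝ≥0∞) ^ p / (‖w - v‖₊ : ℝ≥0∞) ^ α := rfl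
  set k : ℝ≥0∞ := ENNReal.ofReal (CL L ^ (-β)) with hk
  set K : ℝ≥0∞ := ENNReal.ofReal (CL L ^ β) with hK
  have hkT : k ≠ ⊤ := ENNReal.ofReal_ne_top
  have lower : ∀ w v : Euc (n+1),
      k * ((‖u (S w) - u (S v)‖₊ : ℝ≥0∞) ^ p / (‖w - v‖₊ : ℝ≥0∞) ^ α)
        ≤ (‖u (S w) - u (S v)‖₊ : ℝ≥0∞) ^ p / (‖S w - S v‖₊ : ℝ≥0∞) ^ α := by
    intro w v
    have h1 := ennKey ((‖u (S w) - u (S v)‖₊ : ℝ≥0∞) ^ p) hC1 (hfwd w v) hα hαβ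
    rwa [ofReal_norm, ofReal_norm] at h1
  have upper : ∀ w v : Euc (n+1),
      (‖u (S w) - u (S v)‖₊ : ℝ≥0∞) ^ p / (‖S w - S v‖₊ : ℝ≥0∞) ^ α
        ≤ K * ((‖u (S w) - u (S v)‖₊ : ℝ≥0∞) ^ p / (‖w - v‖₊ : ℝ≥0∞) ^ α) := by
    intro w v
    have h1 := ennKey2 ((‖u (S w) - u (S v)‖₊ : ℝ≥0∞) ^ p) hC1 (hrev w v) hα hαβ
    rwa [ofReal_norm, ofReal_norm] at h1
  constructor
  · show k * wSemiP (n+1) s p H (u ∘ S) ≤ wSemiP (n+1) s p D u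
    rw [cov, hUdef]
    calc k * ∫⁻ w in H, ∫⁻ v in H,
            (‖u (S w) - u (S v)‖₊ : ℝ≥0∞) ^ p / (‖w - v‖₊ : ℝ≥0∞) ^ α
        = ∫⁻ w in H, k * ∫⁻ v in H,
            (‖u (S w) - u (S v)‖₊ : ℝ≥0∞) ^ p / (‖w - v‖₊ : ℝ≥0∞) ^ α :=
          (lintegral_const_mul' k _ hkT).symm
      _ ≤ ∫⁻ w in H, ∫⁻ v in H,
            (‖u (S w) - u (S v)‖₊ : ℝ≥0∞) ^ p / (‖S w - S v‖₊ : ℝ≥0∞) ^ α := by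
          refine lintegral_mono fun w => ?_
          calc k * ∫⁻ v in H, (‖u (S w) - u (S v)‖₊ : ℝ≥0∞) ^ p / (‖w - v‖₊ : ℝ≥0∞) ^ α
              = ∫⁻ v in H, k * ((‖u (S w) - u (S v)‖₊ : ℝ≥0∞) ^ p / (‖w - v‖₊ : ℝ≥0∞) ^ α) :=
                (lintegral_const_mul' k _ hkT).symm
            _ ≤ _ := lintegral_mono fun v => lower w v
  · show wSemiP (n+1) s p D u ≤ K * wSemiP (n+1) s p H (u ∘ S)
    rw [cov, hUdef]
    calc (∫⁻ w in H, ∫⁻ v in H,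
            (‖u (S w) - u (S v)‖₊ : ℝ≥0∞) ^ p / (‖S w - S v‖₊ : ℝ≥0∞) ^ α)
        ≤ ∫⁻ w in H, ∫⁻ v in H,
            K * ((‖u (S w) - u (S v)‖₊ : ℝ≥0∞) ^ p / (‖w - v‖₊ : ℝ≥0∞) ^ α) :=
          lintegral_mono fun w => lintegral_mono fun v => upper w v
      _ = K * ∫⁻ w in H, ∫⁻ v in H,
            (‖u (S w) - u (S v)‖₊ : ℝ≥0∞) ^ p / (‖w - v‖₊ : ℝ≥0∞) ^ α := by
          rw [← lintegral_const_mul' K _ ENNReal.ofReal_ne_top]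
          exact lintegral_congr fun w => lintegral_const_mul' K _ ENNReal.ofReal_ne_top
end
end
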